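/- arXiv:2204.03425 — 2 statements merged into one kernel-verified Lean document; each statement's English description precedes it below -/
import Mathlib

section
/- Let p > 0 be a real number. The function g : (−∞, p) → ℝ defined by g(t) = exp(−t)·B(p − t) = (p − t)/(exp(p) − exp(t)), where B(z) = z/(exp(z) − 1), is strictly decreasing on (−∞, p). -/
/-- The Bernoulli function `B(z) = z / (exp z − 1)` (for `z ≠ 0`). -/
noncomputable def bernoulliB (z : ℝ) : ℝ := z / (Real.exp z - 1)

theorem coefficient_function_strictAntiOn (p : ℝ) (hp : 0 < p) :
    (∀ t ∈ Set.Iio p,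
      Real.exp (-t) * bernoulliB (p - t) = (p - t) / (Real.exp p - Real.exp t)) ∧
    StrictAntiOn (fun t => Real.exp (-t) * bernoulliB (p - t)) (Set.Iio p) := by
  have heq : ∀ t ∈ Set.Iio p,
      Real.exp (-t) * bernoulliB (p - t) = (p - t) / (Real.exp p - Real.exp t) := by
    intro t ht
    have hlt : t < p := ht
    have h1 : (1:ℝ) < Real.exp (p - t) := by
      rw [Real.one_lt_exp_iff]; linarith
    have h1' : Real.exp (p - t) - 1 ≠ 0 := by linarith
    have hden : Real.exp p - Real.exp t ≠ 0 := by
      have := Real.exp_lt_exp.mpr hlt; linarith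
    have key : Real.exp t * (Real.exp (p - t) - 1) = Real.exp p - Real.exp t := by
      rw [mul_sub, ← Real.exp_add]; ring_nf
    rw [bernoulliB, Real.exp_neg]
    rw [eq_div_iff hden, ← key]
    field_simp
  refine ⟨heq, ?_⟩
  have hanti : StrictAntiOn (fun t => (p - t) / (Real.exp p - Real.exp t)) (Set.Iio p) := by
    apply strictAntiOn_of_deriv_neg (convex_Iio p)
    · apply ContinuousOn.div
      · fun_prop
      · fun_prop
      · intro x hx
        have := Real.exp_lt_exp.mpr (show x < p from hx); linarith
    · intro x hx
      rw [interior_Iio] at hx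
      have hxp : x < p := hx
      have hden : Real.exp p - Real.exp x ≠ 0 := by
        have := Real.exp_lt_exp.mpr hxp; linarith
      have hd : HasDerivAt (fun t => (p - t) / (Real.exp p - Real.exp t))
          ((-1 * (Real.exp p - Real.exp x) - (p - x) * (-Real.exp x)) /
            (Real.exp p - Real.exp x) ^ 2) x := by
        exact HasDerivAt.div (by simpa using (hasDerivAt_id x).const_sub p)
          (by simpa using (Real.hasDerivAt_exp x).const_sub (Real.exp p)) hden
      rw [hd.deriv]
      apply div_neg_of_neg_of_pos
      · have h2 : 1 + (p - x) < Real.exp (p - x) := by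
          have := Real.add_one_lt_exp (show p - x ≠ 0 by linarith)
          linarith
        have h3 : Real.exp x * (1 + (p - x)) < Real.exp x * Real.exp (p - x) := by
          apply mul_lt_mul_of_pos_left h2 (Real.exp_pos x)
        rw [← Real.exp_add] at h3
        have h4 : Real.exp x * (1 + (p - x)) < Real.exp p := by
          convert h3 using 2; ring
        nlinarith
      · positivity
  intro a ha b hb hab
  simp only
  rw [heq a ha, heq b hb]
  exact hanti ha hb hab
end

section
/- Let B(z) = z/(exp(z) − 1) for z ≠ 0 and let p > 0. (i) For every t with 0 < t < p: exp(−t)·B(p − t) < B(p) and B(−(p − t)) < B(−p). (ii) For every t < 0: exp(−t)·B(p − t) > B(p) and B(−(p − t)) > B(−p). -/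
private lemma keyA {p t : ℝ} (ht : 0 < t) (htp : t < p) :
    p * (Real.exp t - 1) < t * (Real.exp p - 1) := by
  have hp : 0 < p := ht.trans htp
  have ha : (0:ℝ) < 1 - t / p := by
    have : t / p < 1 := (div_lt_one hp).2 htp
    linarith
  have hb : 0 < t / p := div_pos ht hp
  have hab : (1 - t / p) + t / p = 1 := by ring
  have h := strictConvexOn_exp.2 (Set.mem_univ (0:ℝ)) (Set.mem_univ p)
    (ne_of_lt hp) ha hb hab
  simp only [smul_eq_mul, mul_zero, zero_add, Real.exp_zero, mul_one] at h
  have hpt : (t / p) * p = t := div_mul_cancel₀ t (ne_of_gt hp)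
  rw [hpt] at h
  have h2 : Real.exp t - 1 < (t / p) * (Real.exp p - 1) := by nlinarith
  calc p * (Real.exp t - 1) < p * ((t / p) * (Real.exp p - 1)) :=
        mul_lt_mul_of_pos_left h2 hp
    _ = t * (Real.exp p - 1) := by field_simp

private lemma keyB {p t : ℝ} (hp : 0 < p) (ht : t < 0) :
    t * (Real.exp p - 1) < p * (Real.exp t - 1) := by
  have h1 : p + 1 < Real.exp p := Real.add_one_lt_exp (ne_of_gt hp)
  have h2 : t + 1 < Real.exp t := Real.add_one_lt_exp (ne_of_lt ht)
  nlinarith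

private lemma bern_neg (s : ℝ) : bernoulliB (-s) = s / (1 - Real.exp (-s)) := by
  rw [bernoulliB, show Real.exp (-s) - 1 = -(1 - Real.exp (-s)) by ring,
    div_neg, neg_div, neg_neg]

theorem upwind_coefficient_comparison (p : ℝ) (hp : 0 < p) :
    (∀ t : ℝ, 0 < t → t < p →
      Real.exp (-t) * bernoulliB (p - t) < bernoulliB p ∧
      bernoulliB (-(p - t)) < bernoulliB (-p)) ∧
    (∀ t : ℝ, t < 0 →
      Real.exp (-t) * bernoulliB (p - t) > bernoulliB p ∧
      bernoulliB (-(p - t)) > bernoulliB (-p)) := by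
  have hep : 1 < Real.exp p := by
    have := Real.add_one_lt_exp (ne_of_gt hp); linarith
  have hemp : Real.exp (-p) < 1 := Real.exp_lt_one_iff.2 (by linarith)
  constructor
  · intro t ht htp
    have hkey := keyA ht htp
    have hq : 0 < p - t := by linarith
    have heq : 1 < Real.exp (p - t) := by
      have := Real.add_one_lt_exp (ne_of_gt hq); linarith
    have hemq : Real.exp (-(p - t)) < 1 := Real.exp_lt_one_iff.2 (by linarith)
    have het : 0 < Real.exp t := Real.exp_pos t
    have hemt : 0 < Real.exp (-t) := Real.exp_pos (-t)
    have e1 : Real.exp (p - t) = Real.exp p * Real.exp (-t) := by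
      rw [← Real.exp_add]; ring_nf
    have e2 : Real.exp (-t) * Real.exp t = 1 := by rw [← Real.exp_add]; simp
    have e3 : Real.exp (-(p - t)) * Real.exp (p - t) = 1 := by rw [← Real.exp_add]; simp
    have e4 : Real.exp (-p) * Real.exp p = 1 := by rw [← Real.exp_add]; simp
    have e5 : Real.exp (-(p - t)) * Real.exp p = Real.exp t := by
      rw [← Real.exp_add]; ring_nf
    constructor
    · rw [bernoulliB, bernoulliB, mul_div_assoc',
        div_lt_div_iff₀ (by linarith) (by linarith)]
      nlinarith [mul_pos het (sub_pos.2 hep)]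
    · rw [bern_neg, bern_neg, div_lt_div_iff₀ (by linarith) (by linarith)]
      nlinarith [mul_pos (Real.exp_pos (-p)) (Real.exp_pos (-(p-t))),
        mul_pos het (Real.exp_pos (-p)), Real.exp_pos p, e4, e5, hkey]
  · intro t ht
    have hkey := keyB hp ht
    have hq : 0 < p - t := by linarith
    have heq : 1 < Real.exp (p - t) := by
      have := Real.add_one_lt_exp (ne_of_gt hq); linarith
    have hemq : Real.exp (-(p - t)) < 1 := Real.exp_lt_one_iff.2 (by linarith)
    have het : 0 < Real.exp t := Real.exp_pos t
    have hemt : 0 < Real.exp (-t) := Real.exp_pos (-t)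
    have e1 : Real.exp (p - t) = Real.exp p * Real.exp (-t) := by
      rw [← Real.exp_add]; ring_nf
    have e2 : Real.exp (-t) * Real.exp t = 1 := by rw [← Real.exp_add]; simp
    have e3 : Real.exp (-(p - t)) * Real.exp (p - t) = 1 := by rw [← Real.exp_add]; simp
    have e4 : Real.exp (-p) * Real.exp p = 1 := by rw [← Real.exp_add]; simp
    have e5 : Real.exp (-(p - t)) * Real.exp p = Real.exp t := by
      rw [← Real.exp_add]; ring_nf
    constructor
    · rw [gt_iff_lt, bernoulliB, bernoulliB, mul_div_assoc',
        div_lt_div_iff₀ (by linarith) (by linarith)]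
      nlinarith [mul_pos het (sub_pos.2 hep)]
    · rw [gt_iff_lt, bern_neg, bern_neg, div_lt_div_iff₀ (by linarith) (by linarith)]
      nlinarith [mul_pos (Real.exp_pos (-p)) (Real.exp_pos (-(p-t))),
        mul_pos het (Real.exp_pos (-p)), Real.exp_pos p, e4, e5, hkey]
end
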